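/- Let ℓ ≥ 1 be an integer and let 𝒫 be a finite family of paths on the integer grid (finite nonempty subsets P ⊆ ℤ² whose induced subgraph in the grid graph on ℤ² is a path) such that every point of every P ∈ 𝒫 has x-coordinate in {1, …, ℓ}. Let G be the vertex intersection graph of 𝒫 (two distinct paths adjacent if and only if they share a grid point). Then G has a tree decomposition 𝒯 with independence number α(𝒯) ≤ ℓ; in particular, tree-α(G) ≤ ℓ. -/

import Mathlib

open Classical

/-- A tree decomposition of a graph `G`. -/
structure TreeDecomp {V : Type*} (G : SimpleGraph V) where
  ι : Type
  fin : Fintype ι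
  T : SimpleGraph ι
  isTree : T.IsTree
  bag : ι → Set V
  mem_bag : ∀ v : V, ∃ t, v ∈ bag t
  edge_bag : ∀ ⦃u v : V⦄, G.Adj u v → ∃ t, u ∈ bag t ∧ v ∈ bag t
  bag_connected : ∀ v : V, (T.induce {t | v ∈ bag t}).Connected

/-- `I` is an independent set of `G` contained in `S`, i.e. an independent set of `G[S]`. -/
def IsIndepSetIn {V : Type*} (G : SimpleGraph V) (S : Set V) (I : Finset V) : Prop :=
  ↑I ⊆ S ∧ ∀ u ∈ I, ∀ v ∈ I, u ≠ v → ¬ G.Adj u v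

/-- `α(G[S]) ≤ k`. -/
def IndepLE {V : Type*} (G : SimpleGraph V) (S : Set V) (k : ℕ) : Prop :=
  ∀ I : Finset V, IsIndepSetIn G S I → I.card ≤ k

/-- The independence number of the tree decomposition is at most `k`. -/
def TreeDecomp.IndepNumLE {V : Type*} {G : SimpleGraph V} (td : TreeDecomp G) (k : ℕ) : Prop :=
  ∀ t : td.ι, IndepLE G (td.bag t) k

/-- The tree-independence number of `G` is at most `k`. -/
def treeAlphaLE {V : Type*} (G : SimpleGraph V) (k : ℕ) : Prop :=
  ∃ td : TreeDecomp G, td.IndepNumLE k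

/-- The tree-independence number of `G`. -/
noncomputable def treeAlpha {V : Type*} (G : SimpleGraph V) : ℕ :=
  sInf {k | treeAlphaLE G k}

/-- A layering of `G`, encoded by the function sending a vertex to the index of its layer. -/
def IsLayering {V : Type*} (G : SimpleGraph V) (L : V → ℕ) : Prop :=
  ∀ ⦃u v : V⦄, G.Adj u v → (L u : ℤ) ≤ (L v : ℤ) + 1

/-- The layered tree-independence number of `G` is at most `k`. -/
def layeredTreeAlphaLE {V : Type*} (G : SimpleGraph V) (k : ℕ) : Prop :=
  ∃ (td : TreeDecomp G) (L : V → ℕ), IsLayering G L ∧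
    ∀ (t : td.ι) (i : ℕ), IndepLE G (td.bag t ∩ {v | L v = i}) k

/-- The layered tree-independence number of `G`. -/
noncomputable def layeredTreeAlpha {V : Type*} (G : SimpleGraph V) : ℕ :=
  sInf {k | layeredTreeAlphaLE G k}

/-- The number of elements of the multiset `𝒞` containing `v` (with multiplicity). -/
noncomputable def coverCount {V : Type*} (𝒞 : Multiset (Set V)) (v : V) : ℕ :=
  Multiset.countP (fun C => v ∈ C) 𝒞

/-- `𝒞` is a `β`-general cover: every vertex belongs to at least `β·|𝒞|` elements. -/
def IsGeneralCover {V : Type*} (β : ℝ) (𝒞 : Multiset (Set V)) : Prop :=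
  𝒞 ≠ 0 ∧ ∀ v : V, β * (Multiset.card 𝒞 : ℝ) ≤ (coverCount 𝒞 v : ℝ)

/-- The intersection graph of an (indexed) family of sets. -/
def intersectionGraph {ι : Type*} {α : Type*} (D : ι → Set α) : SimpleGraph ι where
  Adj i j := i ≠ j ∧ (D i ∩ D j).Nonempty
  symm := by
    constructor
    rintro i j ⟨hne, x, hx1, hx2⟩
    exact ⟨hne.symm, x, hx2, hx1⟩
  loopless := by
    constructor
    rintro i ⟨hne, -⟩
    exact hne rfl

/-- The `p`-th power of a graph. -/
def gpower {V : Type*} (G : SimpleGraph V) (p : ℕ) : SimpleGraph V where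
  Adj u v := u ≠ v ∧ ∃ w : G.Walk u v, w.length ≤ p
  symm := by
    constructor
    rintro u v ⟨hne, w, hw⟩
    exact ⟨hne.symm, w.reverse, by simpa using hw⟩
  loopless := by
    constructor
    rintro u ⟨hne, -⟩
    exact hne rfl

/-- The axis-aligned closed hypercube of side length `r` with lower corner `x`. -/
def cube (d : ℕ) (x : EuclideanSpace ℝ (Fin d)) (r : ℝ) : Set (EuclideanSpace ℝ (Fin d)) :=
  {y | ∀ i, x i ≤ y i ∧ y i ≤ x i + r}

/-- The size of an object: the side length of its smallest enclosing axis-aligned hypercube. -/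
noncomputable def objSize (d : ℕ) (O : Set (EuclideanSpace ℝ (Fin d))) : ℝ :=
  sInf {r : ℝ | 0 ≤ r ∧ ∃ x, O ⊆ cube d x r}

/-- The collection `O` is `c`-fat. -/
def IsFat {ι : Type*} (d : ℕ) (c : ℝ) (O : ι → Set (EuclideanSpace ℝ (Fin d))) : Prop :=
  ∀ r : ℝ, 0 < r → ∀ x : EuclideanSpace ℝ (Fin d), ∀ P : Finset ι,
    (∀ i ∈ P, ∀ j ∈ P, i ≠ j → Disjoint (O i) (O j)) →
    (∀ i ∈ P, (O i ∩ cube d x r).Nonempty ∧ r ≤ objSize d (O i)) →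
    ∃ pts : Finset (EuclideanSpace ℝ (Fin d)),
      (pts.card : ℝ) ≤ c ∧ ∀ i ∈ P, ∃ p ∈ pts, p ∈ O i

/-- The `n`-dimensional grid graph of width `n`. -/
def gridGraphN (n : ℕ) : SimpleGraph (Fin n → Fin n) where
  Adj a b := ∑ i, ((a i : ℤ) - (b i : ℤ)).natAbs = 1
  symm := by
    constructor
    intro a b h
    rw [← h]
    exact Finset.sum_congr rfl fun i _ => by omega
  loopless := by
    constructor
    intro a h
    simp at h

/-- The grid graph on `ℤ²`. -/
def latticeGraph : SimpleGraph (ℤ × ℤ) where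
  Adj p q := (p.1 - q.1).natAbs + (p.2 - q.2).natAbs = 1
  symm := by
    constructor
    intro p q h
    omega
  loopless := by
    constructor
    intro p h
    simp at h

/-- `P` is (the vertex set of) a path on the integer grid: a finite nonempty subset of `ℤ²`
whose induced subgraph in the grid graph is a path. -/
def IsGridPath (P : Set (ℤ × ℤ)) : Prop :=
  P.Finite ∧ P.Nonempty ∧ (latticeGraph.induce P).IsTree ∧
    ∀ v : P, ((latticeGraph.induce P).neighborSet v).ncard ≤ 2

section Aux

/-- Walks starting in an "adjacency-closed" set stay in it. -/
lemma walk_stays {V : Type*} {G : SimpleGraph V} {S : Set V}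
    (hS : ∀ a b, a ∈ S → G.Adj a b → b ∈ S) :
    ∀ {u v : V}, G.Walk u v → u ∈ S → v ∈ S := by
  intro u v w
  induction w with
  | nil => exact id
  | cons h _ ih => exact fun hu => ih (hS _ _ hu h)

lemma pathGraph_isAcyclic (n : ℕ) : (SimpleGraph.pathGraph n).IsAcyclic := by
  rw [SimpleGraph.isAcyclic_iff_forall_adj_isBridge]
  intro u v huv
  rw [SimpleGraph.pathGraph_adj] at huv
  suffices h : s(u, v) ∈ (SimpleGraph.pathGraph n).edgeSet ∧
      ¬((SimpleGraph.pathGraph n) \ SimpleGraph.fromEdgeSet {s(u, v)}).Reachable u v by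
    rw [SimpleGraph.isBridge_iff]; exact h.2
  constructor
  · rw [SimpleGraph.mem_edgeSet, SimpleGraph.pathGraph_adj]; exact huv
  · intro hreach
    obtain ⟨w⟩ := hreach
    rcases huv with h1 | h1
    · have := walk_stays (G := (SimpleGraph.pathGraph n) \ SimpleGraph.fromEdgeSet {s(u, v)})
        (S := {x : Fin n | x.val ≤ u.val}) ?_ w (by simp)
      · simp only [Set.mem_setOf_eq] at this; omega
      · intro a b ha hab
        simp only [SimpleGraph.sdiff_adj, SimpleGraph.fromEdgeSet_adj, Set.mem_singleton_iff,
          SimpleGraph.pathGraph_adj] at hab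
        obtain ⟨h2, h3⟩ := hab
        simp only [Set.mem_setOf_eq] at ha ⊢
        rcases h2 with h2 | h2
        · by_contra hb
          have hav : a = u := by apply Fin.ext; omega
          have hbv : b = v := by apply Fin.ext; omega
          exact h3 ⟨by rw [hav, hbv], by
            intro hh
            have := congrArg Fin.val hh
            rw [hav, hbv] at h2
            omega⟩
        · omega
    · have := walk_stays (G := (SimpleGraph.pathGraph n) \ SimpleGraph.fromEdgeSet {s(u, v)})
        (S := {x : Fin n | u.val ≤ x.val}) ?_ w (by simp)
      · simp only [Set.mem_setOf_eq] at this; omega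
      · intro a b ha hab
        simp only [SimpleGraph.sdiff_adj, SimpleGraph.fromEdgeSet_adj, Set.mem_singleton_iff,
          SimpleGraph.pathGraph_adj] at hab
        obtain ⟨h2, h3⟩ := hab
        simp only [Set.mem_setOf_eq] at ha ⊢
        rcases h2 with h2 | h2
        · omega
        · by_contra hb
          have hav : a = u := by apply Fin.ext; omega
          have hbv : b = v := by apply Fin.ext; omega
          exact h3 ⟨by rw [hav, hbv], by
            intro hh
            have := congrArg Fin.val hh
            rw [hav, hbv] at h2
            omega⟩

lemma pathGraph_isTree (n : ℕ) : (SimpleGraph.pathGraph (n + 1)).IsTree :=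
  ⟨SimpleGraph.pathGraph_connected n, pathGraph_isAcyclic (n + 1)⟩

/-- An interval-closed nonempty subset of a path graph induces a connected subgraph. -/
lemma interval_induce_connected {n : ℕ} (S : Set (Fin n)) (hne : S.Nonempty)
    (hint : ∀ u ∈ S, ∀ v ∈ S, ∀ w : Fin n, u ≤ w → w ≤ v → w ∈ S) :
    ((SimpleGraph.pathGraph n).induce S).Connected := by
  have key : ∀ k : ℕ, ∀ a b : Fin n, ∀ (ha : a ∈ S) (hb : b ∈ S), b.val = a.val + k →
      ((SimpleGraph.pathGraph n).induce S).Reachable ⟨a, ha⟩ ⟨b, hb⟩ := by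
    intro k
    induction k with
    | zero =>
      intro a b ha hb hab
      have hab' : a = b := Fin.ext (by omega)
      subst hab'
      rfl
    | succ m ih =>
      intro a b ha hb hab
      have halt : a.val + 1 < n := by omega
      set a' : Fin n := ⟨a.val + 1, halt⟩ with ha'def
      have ha' : a' ∈ S := hint a ha b hb a' (by simp [Fin.le_def, ha'def])
        (by simp only [Fin.le_def, ha'def]; omega)
      have hadj : ((SimpleGraph.pathGraph n).induce S).Adj ⟨a, ha⟩ ⟨a', ha'⟩ := by
        show (SimpleGraph.pathGraph n).Adj a a'
        rw [SimpleGraph.pathGraph_adj]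
        left; rfl
      exact hadj.reachable.trans (ih a' b ha' hb (by simp only [ha'def]; omega))
  rw [SimpleGraph.connected_iff]
  obtain ⟨x, hx⟩ := hne
  refine ⟨?_, ⟨⟨x, hx⟩⟩⟩
  rintro ⟨a, ha⟩ ⟨b, hb⟩
  rcases le_total a b with h | h
  · exact key (b.val - a.val) a b ha hb (by omega)
  · exact (key (a.val - b.val) b a hb ha (by omega)).symm

/-- Intermediate value property for second coordinates along a walk in an induced grid graph. -/
lemma walk_snd_ivt {P : Set (ℤ × ℤ)} :
    ∀ {p q : ↥P} (_ : (latticeGraph.induce P).Walk p q) (y : ℤ),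
      (((p : ℤ × ℤ).2 ≤ y ∧ y ≤ (q : ℤ × ℤ).2) ∨ ((q : ℤ × ℤ).2 ≤ y ∧ y ≤ (p : ℤ × ℤ).2)) →
      ∃ r ∈ P, r.2 = y := by
  intro p q w
  induction w with
  | @nil u =>
    intro y hy
    refine ⟨_, u.2, ?_⟩
    rcases hy with ⟨h1, h2⟩ | ⟨h1, h2⟩ <;> omega
  | @cons u m v h w ih =>
    intro y hy
    have hadj : ((u : ℤ × ℤ).1 - (m : ℤ × ℤ).1).natAbs + ((u : ℤ × ℤ).2 - (m : ℤ × ℤ).2).natAbs = 1 := h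
    by_cases hc1 : ((m : ℤ × ℤ).2 ≤ y ∧ y ≤ (v : ℤ × ℤ).2)
    · exact ih y (Or.inl hc1)
    by_cases hc2 : ((v : ℤ × ℤ).2 ≤ y ∧ y ≤ (m : ℤ × ℤ).2)
    · exact ih y (Or.inr hc2)
    refine ⟨_, u.2, ?_⟩
    rw [not_and_or] at hc1 hc2
    rcases hy with ⟨hy1, hy2⟩ | ⟨hy1, hy2⟩ <;> rcases hc1 with h | h <;> rcases hc2 with h' | h' <;>
      push_neg at h h' <;> omega

end Aux

/-- the vertex intersection graph of a finite family of grid paths all of whose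
points have x-coordinate in `{1, …, ℓ}` has a tree decomposition with independence number at
most `ℓ`. -/
theorem stmt18 {ι : Type} [Fintype ι] (l : ℕ) (hl : 1 ≤ l)
    (P : ι → Set (ℤ × ℤ)) (hpath : ∀ i, IsGridPath (P i))
    (hx : ∀ i, ∀ p ∈ P i, 1 ≤ p.1 ∧ p.1 ≤ (l : ℤ)) :
    ∃ td : TreeDecomp (intersectionGraph P),
      td.IndepNumLE l ∧ treeAlpha (intersectionGraph P) ≤ l := by
  -- Find a range [a, a + N] containing all y-coordinates.
  obtain ⟨a, N, hrange⟩ : ∃ (a : ℤ) (N : ℕ), ∀ i, ∀ p ∈ P i, a ≤ p.2 ∧ p.2 ≤ a + N := by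
    have hfin : (⋃ i, Prod.snd '' P i).Finite :=
      Set.finite_iUnion fun i => ((hpath i).1.image _)
    by_cases hne : hfin.toFinset.Nonempty
    · refine ⟨hfin.toFinset.min' hne, (hfin.toFinset.max' hne - hfin.toFinset.min' hne).toNat,
        fun i p hp => ?_⟩
      have hmem : p.2 ∈ hfin.toFinset := by
        rw [Set.Finite.mem_toFinset]
        exact Set.mem_iUnion.mpr ⟨i, ⟨p, hp, rfl⟩⟩
      have h1 := hfin.toFinset.min'_le _ hmem
      have h2 := hfin.toFinset.le_max' _ hmem
      have h3 := hfin.toFinset.min'_le _ (hfin.toFinset.max'_mem hne)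
      omega
    · refine ⟨0, 0, fun i p hp => ?_⟩
      exact absurd ⟨p.2, by rw [Set.Finite.mem_toFinset]; exact Set.mem_iUnion.mpr ⟨i, ⟨p, hp, rfl⟩⟩⟩
        hne
  -- The bags: paths meeting a given row.
  let td : TreeDecomp (intersectionGraph P) :=
    { ι := Fin (N + 1)
      fin := inferInstance
      T := SimpleGraph.pathGraph (N + 1)
      isTree := pathGraph_isTree N
      bag := fun t => {i | ∃ x : ℤ, (x, a + (t.val : ℤ)) ∈ P i}
      mem_bag := by
        intro i
        obtain ⟨p, hp⟩ := (hpath i).2.1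
        obtain ⟨h1, h2⟩ := hrange i p hp
        refine ⟨⟨(p.2 - a).toNat, by omega⟩, p.1, ?_⟩
        show (p.1, a + (((p.2 - a).toNat : ℕ) : ℤ)) ∈ P i
        have heq : (p.1, a + (((p.2 - a).toNat : ℕ) : ℤ)) = p := by
          rw [show a + (((p.2 - a).toNat : ℕ) : ℤ) = p.2 by omega]
        rw [heq]; exact hp
      edge_bag := by
        rintro i j ⟨hne, x, hxi, hxj⟩
        obtain ⟨h1, h2⟩ := hrange i x hxi
        refine ⟨⟨(x.2 - a).toNat, by omega⟩, ⟨x.1, ?_⟩, ⟨x.1, ?_⟩⟩ <;>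
        · show (x.1, a + (((x.2 - a).toNat : ℕ) : ℤ)) ∈ _
          have heq : (x.1, a + (((x.2 - a).toNat : ℕ) : ℤ)) = x := by
            rw [show a + (((x.2 - a).toNat : ℕ) : ℤ) = x.2 by omega]
          rw [heq]; first | exact hxi | exact hxj
      bag_connected := by
        intro i
        apply interval_induce_connected
        · obtain ⟨p, hp⟩ := (hpath i).2.1
          obtain ⟨h1, h2⟩ := hrange i p hp
          refine ⟨⟨(p.2 - a).toNat, by omega⟩, p.1, ?_⟩
          show (p.1, a + (((p.2 - a).toNat : ℕ) : ℤ)) ∈ P i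
          have heq : (p.1, a + (((p.2 - a).toNat : ℕ) : ℤ)) = p := by
            rw [show a + (((p.2 - a).toNat : ℕ) : ℤ) = p.2 by omega]
          rw [heq]; exact hp
        · rintro t1 ⟨x1, hx1⟩ t2 ⟨x2, hx2⟩ t htl htr
          have hconn := (hpath i).2.2.1.isConnected
          obtain ⟨w⟩ := hconn.preconnected ⟨(x1, a + (t1.val : ℤ)), hx1⟩ ⟨(x2, a + (t2.val : ℤ)), hx2⟩
          rw [Fin.le_def] at htl htr
          obtain ⟨r, hr, hry⟩ := walk_snd_ivt w (a + (t.val : ℤ)) (by left; constructor <;> (simp only; omega))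
          refine ⟨r.1, ?_⟩
          show (r.1, a + (t.val : ℤ)) ∈ P i
          have heq : (r.1, a + (t.val : ℤ)) = r := by rw [← hry]
          rw [heq]; exact hr }
  have hind : td.IndepNumLE l := by
    intro t I hI
    obtain ⟨hsub, hindep⟩ := hI
    have hch : ∀ i : ι, ∃ x : ℤ, i ∈ I → (x, a + (t.val : ℤ)) ∈ P i := by
      intro i
      by_cases hi : i ∈ I
      · obtain ⟨x, hx⟩ := hsub hi
        exact ⟨x, fun _ => hx⟩
      · exact ⟨0, fun h => absurd h hi⟩
    choose f hf using hch
    have hcard : I.card ≤ (Finset.Icc (1 : ℤ) (l : ℤ)).card := by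
      apply Finset.card_le_card_of_injOn f
      · intro i hi
        have := hx i _ (hf i hi)
        simpa [Finset.mem_Icc] using this
      · intro i hi j hj hfij
        by_contra hne
        refine hindep i (by simpa using hi) j (by simpa using hj) hne ⟨hne, ?_⟩
        exact ⟨(f i, a + (t.val : ℤ)), hf i (by simpa using hi), by
          rw [hfij]; exact hf j (by simpa using hj)⟩
    rwa [Int.card_Icc, show ((l : ℤ) + 1 - 1).toNat = l by omega] at hcard
  exact ⟨td, hind, Nat.sInf_le ⟨td, hind⟩⟩
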